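/- Let H be a real inner product space, W ∈ H with ‖W‖ = 1, and y₁, y₂ ∈ H with ⟨y₁, W⟩ > 0 and ⟨y₂, W⟩ > 0. Then the Kropina metric F(z) = ‖z‖²/(2⟨z, W⟩) satisfies the triangle inequality F(y₁ + y₂) ≤ F(y₁) + F(y₂). -/
import Mathlib


open scoped RealInnerProductSpace

theorem kropina_triangle_inequality {H : Type*} [NormedAddCommGroup H]
    [InnerProductSpace ℝ H] (W y₁ y₂ : H) (hW : ‖W‖ = 1)
    (h₁ : 0 < ⟪y₁, W⟫) (h₂ : 0 < ⟪y₂, W⟫) :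
    ‖y₁ + y₂‖ ^ 2 / (2 * ⟪y₁ + y₂, W⟫) ≤
      ‖y₁‖ ^ 2 / (2 * ⟪y₁, W⟫) + ‖y₂‖ ^ 2 / (2 * ⟪y₂, W⟫) := by
  have hadd : ⟪y₁ + y₂, W⟫ = ⟪y₁, W⟫ + ⟪y₂, W⟫ := inner_add_left _ _ _
  have htri : ‖y₁ + y₂‖ ≤ ‖y₁‖ + ‖y₂‖ := norm_add_le _ _
  have hn : (0:ℝ) ≤ ‖y₁ + y₂‖ := norm_nonneg _
  have hp : (0:ℝ) ≤ ‖y₁‖ := norm_nonneg _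
  have hq : (0:ℝ) ≤ ‖y₂‖ := norm_nonneg _
  rw [hadd, div_add_div _ _ (by positivity) (by positivity),
    div_le_div_iff₀ (by positivity) (by positivity)]
  nlinarith [sq_nonneg (‖y₁‖ * ⟪y₂, W⟫ - ‖y₂‖ * ⟪y₁, W⟫), sq_nonneg (‖y₁‖ + ‖y₂‖),
    mul_pos h₁ h₂, mul_le_mul htri htri hn (by positivity : (0:ℝ) ≤ ‖y₁‖ + ‖y₂‖),
    mul_nonneg hp hq]
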